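/- For every bounded measurable function f on [0,∞) in the range of I − S, i.e., f = g − Sg for some g ∈ L^∞(ℝ₊), one has M̄₁(f) = 0, where M̄₁(f) = lim_{θ→∞} limsup_{x→∞} (1/θ) ∫ₓ^{x+θ} f(t) dt. More precisely, for any bounded Lipschitz function G with G′ = f a.e., |(1/θ)∫ₓ^{x+θ} f(t)dt| = |G(x+θ)−G(x)|/θ ≤ 2‖G‖_∞/θ. -/

import Mathlib

open Filter MeasureTheory Set

noncomputable def Sop (f : ℝ → ℝ) (x : ℝ) : ℝ :=
  Real.exp (-x) * ∫ t in (0:ℝ)..x, f t * Real.exp t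

noncomputable def M1 (f : ℝ → ℝ) : ℝ :=
  limsup (fun θ : ℝ =>
    limsup (fun x : ℝ => (1/θ) * ∫ t in x..(x+θ), f t) atTop) atTop

/-! ### Auxiliary lemmas -/

lemma expInt (a b : ℝ) (hab : a ≤ b) :
    ∫ s in Ioc a b, Real.exp (-s) = Real.exp (-a) - Real.exp (-b) := by
  rw [← intervalIntegral.integral_of_le hab]
  have : ∀ s ∈ uIcc a b, HasDerivAt (fun u => -Real.exp (-u)) (Real.exp (-s)) s := by
    intro s _
    exact (((Real.hasDerivAt_exp (-s)).comp s (hasDerivAt_neg s)).neg).congr_deriv (by simp)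
  rw [intervalIntegral.integral_eq_sub_of_hasDerivAt this
    ((Real.continuous_exp.comp continuous_neg).intervalIntegrable a b)]
  ring

lemma fubini_key (x y : ℝ) (hxy : x ≤ y) (h : ℝ → ℝ)
    (hi : IntegrableOn h (Ioc x y)) :
    ∫ s in Ioc x y, Real.exp (-s) * ∫ t in Ioc x s, h t
      = ∫ t in Ioc x y, (Real.exp (-t) - Real.exp (-y)) * h t := by
  set μ := volume.restrict (Ioc x y) with hμ
  set F : ℝ × ℝ → ℝ :=
    ({p : ℝ × ℝ | p.2 ≤ p.1}).indicator (fun p => Real.exp (-p.1) * h p.2) with hF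
  have hmeas : MeasurableSet {p : ℝ × ℝ | p.2 ≤ p.1} :=
    measurableSet_le measurable_snd measurable_fst
  have hexpint : Integrable (fun s => Real.exp (-s)) μ :=
    (Real.continuous_exp.comp continuous_neg).integrableOn_Ioc
  have hFint : Integrable F (μ.prod μ) :=
    (Integrable.mul_prod hexpint hi).indicator hmeas
  have swap : (∫ s, ∫ t, F (s, t) ∂μ ∂μ) = ∫ t, ∫ s, F (s, t) ∂μ ∂μ :=
    integral_integral_swap hFint
  have hL : (∫ s, ∫ t, F (s, t) ∂μ ∂μ)
      = ∫ s in Ioc x y, Real.exp (-s) * ∫ t in Ioc x s, h t := by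
    rw [hμ]
    apply setIntegral_congr_fun measurableSet_Ioc
    intro s hs
    have h1 : ∀ t, F (s, t) = (Iic s).indicator (fun t => Real.exp (-s) * h t) t := by
      intro t
      simp [hF, Set.indicator_apply, Set.mem_Iic]
    simp_rw [h1]
    rw [setIntegral_indicator measurableSet_Iic, Ioc_inter_Iic, min_eq_right hs.2,
      integral_const_mul]
  have hR : (∫ t, ∫ s, F (s, t) ∂μ ∂μ)
      = ∫ t in Ioc x y, (Real.exp (-t) - Real.exp (-y)) * h t := by
    rw [hμ]
    apply setIntegral_congr_fun measurableSet_Ioc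
    intro t ht
    have h1 : ∀ s, F (s, t) = (Ici t).indicator (fun s => Real.exp (-s) * h t) s := by
      intro s
      simp [hF, Set.indicator_apply, Set.mem_Ici]
    simp_rw [h1]
    rw [setIntegral_indicator measurableSet_Ici]
    have h2 : Ioc x y ∩ Ici t = Icc t y := by
      ext s
      simp only [mem_inter_iff, mem_Ioc, mem_Ici, mem_Icc]
      constructor
      · rintro ⟨⟨_, h2⟩, h3⟩; exact ⟨h3, h2⟩
      · rintro ⟨h2, h3⟩; exact ⟨⟨lt_of_lt_of_le ht.1 h2, h3⟩, h2⟩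
    rw [h2, integral_mul_const, integral_Icc_eq_integral_Ioc, expInt t y ht.2]
  rw [hL] at swap
  rw [hR] at swap
  exact swap

lemma bddIntInt (f : ℝ → ℝ) (M : ℝ) (a b : ℝ) (hf : Measurable f)
    (hfb : ∀ t ∈ uIoc a b, |f t| ≤ M) : IntervalIntegrable f volume a b := by
  rw [intervalIntegrable_iff]
  have : IsFiniteMeasure (volume.restrict (uIoc a b)) :=
    ⟨by rw [Measure.restrict_apply_univ]; exact measure_Ioc_lt_top⟩
  apply Integrable.mono' (integrable_const M)
  · exact hf.aestronglyMeasurable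
  · filter_upwards [self_mem_ae_restrict measurableSet_uIoc] with t ht
    exact hfb t ht

section main
variable (g : ℝ → ℝ) (C : ℝ) (hg : Measurable g) (hgb : ∀ x, |g x| ≤ C)
include hg hgb

lemma hIi (a b : ℝ) : IntervalIntegrable (fun t => g t * Real.exp t) volume a b := by
  apply bddIntInt (fun t => g t * Real.exp t) (C * Real.exp (max a b)) a b (hg.mul Real.measurable_exp)
  intro t ht
  have ht2 : t ≤ max a b := ht.2
  have h0 : (0:ℝ) < Real.exp t := Real.exp_pos t
  rw [abs_mul, abs_of_pos h0]
  exact mul_le_mul (hgb t) (Real.exp_le_exp.2 ht2) h0.le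
    (le_trans (abs_nonneg _) (hgb t))

lemma sop_cont : Continuous (Sop g) := by
  have : Sop g = fun z => Real.exp (-z) * ∫ t in (0:ℝ)..z, g t * Real.exp t := rfl
  rw [this]
  exact (Real.continuous_exp.comp continuous_neg).mul
    (intervalIntegral.continuous_primitive (fun a b => hIi g C hg hgb a b) 0)

lemma key (x y : ℝ) (hxy : x ≤ y) :
    ∫ t in x..y, (g t - Sop g t) = Sop g y - Sop g x := by
  set h : ℝ → ℝ := fun t => g t * Real.exp t with hh
  set F0 : ℝ → ℝ := fun z => ∫ t in (0:ℝ)..z, h t with hF0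
  have hIh := hIi g C hg hgb
  have hgint : IntervalIntegrable g volume x y :=
    bddIntInt g C x y hg (fun t _ => hgb t)
  have hSint : IntervalIntegrable (Sop g) volume x y :=
    (sop_cont g C hg hgb).intervalIntegrable x y
  have hiIoc : IntegrableOn h (Ioc x y) :=
    (intervalIntegrable_iff_integrableOn_Ioc_of_le hxy).1 (hIh x y)
  have hgIoc : IntegrableOn g (Ioc x y) :=
    (intervalIntegrable_iff_integrableOn_Ioc_of_le hxy).1 hgint
  have contF0 : Continuous F0 :=
    intervalIntegral.continuous_primitive (fun a b => hIh a b) 0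
  have hSopeq : ∀ z, Sop g z = Real.exp (-z) * F0 z := fun z => rfl
  have hadj : ∀ s, F0 x + ∫ t in x..s, h t = F0 s := fun s =>
    intervalIntegral.integral_add_adjacent_intervals (hIh 0 x) (hIh x s)
  have hSsplit : ∫ s in Ioc x y, Sop g s
      = ∫ s in Ioc x y, (Real.exp (-s) * F0 x + Real.exp (-s) * ∫ t in Ioc x s, h t) := by
    apply setIntegral_congr_fun measurableSet_Ioc
    intro s hs
    have e1 : Sop g s = Real.exp (-s) * (F0 x + ∫ t in x..s, h t) := by
      rw [hadj s]; rfl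
    rw [e1, mul_add, intervalIntegral.integral_of_le hs.1.le]
  have hint1 : IntegrableOn (fun s => Real.exp (-s) * F0 x) (Ioc x y) :=
    ((Real.continuous_exp.comp continuous_neg).mul continuous_const).integrableOn_Ioc
  have hint2 : IntegrableOn (fun s => Real.exp (-s) * ∫ t in Ioc x s, h t) (Ioc x y) := by
    apply IntegrableOn.congr_fun
      (f := fun s => Real.exp (-s) * (F0 s - F0 x))
    · exact ((Real.continuous_exp.comp continuous_neg).mul
        (contF0.sub continuous_const)).integrableOn_Ioc
    · intro s hs
      show Real.exp (-s) * (F0 s - F0 x) = Real.exp (-s) * ∫ t in Ioc x s, h t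
      rw [← hadj s, intervalIntegral.integral_of_le hs.1.le]
      ring
    · exact measurableSet_Ioc
  have hfub := fubini_key x y hxy h hiIoc
  have hpt : ∀ t, (Real.exp (-t) - Real.exp (-y)) * h t = g t - Real.exp (-y) * h t := by
    intro t
    have hexp : Real.exp (-t) * Real.exp t = 1 := by rw [← Real.exp_add]; simp
    rw [hh]
    linear_combination g t * hexp
  have hIoc_h : ∫ t in Ioc x y, h t = F0 y - F0 x := by
    rw [← intervalIntegral.integral_of_le hxy, ← hadj y]; ring
  have hR2 : ∫ t in Ioc x y, (Real.exp (-t) - Real.exp (-y)) * h t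
      = (∫ t in Ioc x y, g t) - Real.exp (-y) * (F0 y - F0 x) := by
    simp_rw [hpt]
    rw [integral_sub hgIoc (hiIoc.const_mul _), integral_const_mul, hIoc_h]
  have hcalc : ∫ s in Ioc x y, Sop g s
      = (∫ t in Ioc x y, g t) + Real.exp (-x) * F0 x - Real.exp (-y) * F0 y := by
    rw [hSsplit, integral_add hint1 hint2, integral_mul_const, expInt x y hxy,
      hfub, hR2]
    ring
  rw [intervalIntegral.integral_sub hgint hSint, intervalIntegral.integral_of_le hxy,
    intervalIntegral.integral_of_le hxy, hcalc, hSopeq, hSopeq]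
  ring

lemma sop_bound (z : ℝ) (hz : 0 ≤ z) : |Sop g z| ≤ C := by
  have hC0 : (0:ℝ) ≤ C := le_trans (abs_nonneg _) (hgb 0)
  have h1 : |∫ t in (0:ℝ)..z, g t * Real.exp t| ≤ ∫ t in (0:ℝ)..z, |g t * Real.exp t| :=
    intervalIntegral.abs_integral_le_integral_abs hz
  have h2 : (∫ t in (0:ℝ)..z, |g t * Real.exp t|) ≤ ∫ t in (0:ℝ)..z, C * Real.exp t := by
    apply intervalIntegral.integral_mono_on hz ((hIi g C hg hgb 0 z).abs)
      ((continuous_const.mul Real.continuous_exp).intervalIntegrable 0 z)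
    intro t _
    rw [abs_mul, abs_of_pos (Real.exp_pos t)]
    exact mul_le_mul_of_nonneg_right (hgb t) (Real.exp_pos t).le
  have h3 : (∫ t in (0:ℝ)..z, C * Real.exp t) = C * (Real.exp z - 1) := by
    rw [intervalIntegral.integral_const_mul, integral_exp, Real.exp_zero]
  have h4 : |Sop g z| = Real.exp (-z) * |∫ t in (0:ℝ)..z, g t * Real.exp t| := by
    rw [Sop, abs_mul, abs_of_pos (Real.exp_pos (-z))]
  rw [h4]
  have h5 : Real.exp (-z) * |∫ t in (0:ℝ)..z, g t * Real.exp t|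
      ≤ Real.exp (-z) * (C * (Real.exp z - 1)) := by
    apply mul_le_mul_of_nonneg_left _ (Real.exp_pos (-z)).le
    exact le_trans h1 (le_trans h2 (le_of_eq h3))
  refine le_trans h5 ?_
  have hexp : Real.exp (-z) * Real.exp z = 1 := by rw [← Real.exp_add]; simp
  nlinarith [Real.exp_pos (-z)]

end main

/-- If `f = g − Sg` for some bounded measurable `g`, then `M̄₁(f) = 0`; more precisely,
for any bounded Lipschitz-type primitive `G` of `f`, the window averages of `f` are
bounded by `2‖G‖_∞/θ`. -/
theorem stmt6 (g : ℝ → ℝ) (C : ℝ) (hg : Measurable g) (hgb : ∀ x, |g x| ≤ C) :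
    M1 (fun x => g x - Sop g x) = 0 ∧
    (∀ (G f : ℝ → ℝ) (D : ℝ), (∀ x, |G x| ≤ D) →
      (∀ x y : ℝ, 0 ≤ x → x ≤ y → G y - G x = ∫ t in x..y, f t) →
      ∀ θ > (0:ℝ), ∀ x ≥ (0:ℝ),
        |(1/θ) * ∫ t in x..(x+θ), f t| ≤ 2 * D / θ) := by
  constructor
  · -- main part
    set a : ℝ → ℝ → ℝ := fun θ x => (1/θ) * ∫ t in x..(x+θ), (g t - Sop g t) with ha
    have habs : ∀ θ > (0:ℝ), ∀ x ≥ (0:ℝ), |a θ x| ≤ 2*C/θ := by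
      intro θ hθ x hx
      have hxy : x ≤ x + θ := by linarith
      have hk := key g C hg hgb x (x+θ) hxy
      have e1 : a θ x = (1/θ) * (Sop g (x+θ) - Sop g x) := by rw [ha]; simp only; rw [hk]
      rw [e1, abs_mul, abs_of_pos (show (0:ℝ) < 1/θ by positivity)]
      have b1 := sop_bound g C hg hgb x hx
      have b2 := sop_bound g C hg hgb (x+θ) (by linarith)
      have hd : |Sop g (x+θ) - Sop g x| ≤ 2*C := by
        have l1 := abs_le.1 b1
        have l2 := abs_le.1 b2
        rw [abs_le]
        constructor <;> linarith
      calc 1/θ * |Sop g (x+θ) - Sop g x| ≤ 1/θ * (2*C) :=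
            mul_le_mul_of_nonneg_left hd (by positivity)
        _ = 2*C/θ := by ring
    have hlim : Tendsto (fun θ => limsup (a θ) atTop) atTop (nhds 0) := by
      have hg2 : Tendsto (fun θ : ℝ => 2*C/θ) atTop (nhds 0) :=
        Tendsto.div_atTop tendsto_const_nhds tendsto_id
      apply squeeze_zero_norm' ?_ hg2
      filter_upwards [eventually_gt_atTop (0:ℝ)] with θ hθ
      have hev : ∀ᶠ x in atTop, |a θ x| ≤ 2*C/θ := by
        filter_upwards [eventually_ge_atTop (0:ℝ)] with x hx
        exact habs θ hθ x hx
      have hub : ∀ᶠ x in atTop, a θ x ≤ 2*C/θ := hev.mono fun x h => (abs_le.1 h).2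
      have hlb : ∀ᶠ x in atTop, -(2*C/θ) ≤ a θ x := hev.mono fun x h => (abs_le.1 h).1
      have hbdd : IsBoundedUnder (· ≤ ·) atTop (a θ) :=
        ⟨2*C/θ, by simpa [eventually_map] using hub⟩
      have hcob : IsCoboundedUnder (· ≤ ·) atTop (a θ) :=
        isCoboundedUnder_le_of_eventually_le atTop hlb
      have h1 : limsup (a θ) atTop ≤ 2*C/θ := limsup_le_of_le hcob hub
      have h2 : -(2*C/θ) ≤ limsup (a θ) atTop :=
        le_limsup_of_frequently_le hlb.frequently hbdd
      rw [Real.norm_eq_abs, abs_le]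
      exact ⟨by linarith, h1⟩
    have hM1 : M1 (fun x => g x - Sop g x) = limsup (fun θ => limsup (a θ) atTop) atTop := rfl
    rw [hM1]
    exact hlim.limsup_eq
  · intro G f D hGD hGf θ hθ x hx
    rw [← hGf x (x+θ) hx (by linarith)]
    rw [abs_mul, abs_of_pos (show (0:ℝ) < 1/θ by positivity)]
    have hd : |G (x+θ) - G x| ≤ 2*D := by
      have l1 := abs_le.1 (hGD x)
      have l2 := abs_le.1 (hGD (x+θ))
      rw [abs_le]
      constructor <;> linarith
    calc 1/θ * |G (x+θ) - G x| ≤ 1/θ * (2*D) :=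
          mul_le_mul_of_nonneg_left hd (by positivity)
      _ = 2*D/θ := by ring
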